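/- Let Φ be the set of laws F_n(ℙ) of terminal values of spherical martingales (F_i)_{i=0}^n valued in an open set O ⊆ ℝ^d with fixed initial law F_0 ∼ μ. Then Φ is convex: for any two such laws σ', σ'', the average (σ' + σ'')/2 is again the terminal law of a spherical martingale in O starting from μ. -/

import Mathlib

open MeasureTheory ProbabilityTheory
open scoped ENNReal

/-- `σ` is the law of the terminal value `F n` of a spherical martingale
`(F_k)_{k ≤ n}` valued in `O`, driven by i.i.d. directions `X_k` with common law
`U` (the uniform measure on the unit sphere), with bounded history-measurable
radius functions, and with initial law `F 0 ∼ μ`. -/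
def IsSphericalTerminalLaw (d : ℕ) (O : Set (EuclideanSpace ℝ (Fin d)))
    (U μ σ : Measure (EuclideanSpace ℝ (Fin d))) : Prop :=
  ∃ (n : ℕ) (Ω : Type) (_ : MeasurableSpace Ω) (P : Measure Ω),
    IsProbabilityMeasure P ∧
    ∃ (F X : ℕ → Ω → EuclideanSpace ℝ (Fin d)) (r : ℕ → Ω → ℝ),
      (∀ k, Measurable (F k)) ∧ (∀ k, Measurable (X k)) ∧ (∀ k, Measurable (r k)) ∧
      P.map (F 0) = μ ∧
      (∀ k, 1 ≤ k → P.map (X k) = U) ∧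
      iIndepFun
        (fun k => if k = 0 then F 0 else X k) P ∧
      (∀ k, ∃ C : ℝ, ∀ ω, 0 ≤ r k ω ∧ r k ω ≤ C) ∧
      (∀ k < n, ∀ ω, F (k + 1) ω = F k ω + r (k + 1) ω • X (k + 1) ω) ∧
      (∀ k < n, Measurable[MeasurableSpace.comap
          (fun ω => (F 0 ω, fun i : Fin k => X (i + 1) ω)) inferInstance]
        (r (k + 1))) ∧
      (∀ ω, F 0 ω ∈ O) ∧
      (∀ k < n, ∀ ω, ∀ lam ∈ Set.Icc (0 : ℝ) 1,
        F k ω + (lam * r (k + 1) ω) • X (k + 1) ω ∈ O) ∧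
      P.map (F n) = σ

theorem stmt16 (d : ℕ) (hd : 0 < d) (O : Set (EuclideanSpace ℝ (Fin d)))
    (hO : IsOpen O)
    (U : Measure (EuclideanSpace ℝ (Fin d))) [IsProbabilityMeasure U]
    (hUsphere : U (Metric.sphere (0 : EuclideanSpace ℝ (Fin d)) 1)ᶜ = 0)
    (hUhemi : U {y : EuclideanSpace ℝ (Fin d) | 0 < y ⟨0, hd⟩} = 1 / 2 ∧
      U {y : EuclideanSpace ℝ (Fin d) | y ⟨0, hd⟩ < 0} = 1 / 2)
    (μ σ' σ'' : Measure (EuclideanSpace ℝ (Fin d)))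
    [IsProbabilityMeasure μ]
    (h' : IsSphericalTerminalLaw d O U μ σ')
    (h'' : IsSphericalTerminalLaw d O U μ σ'') :
    IsSphericalTerminalLaw d O U μ ((2 : ℝ≥0∞)⁻¹ • (σ' + σ'')) := by
  classical
  obtain ⟨n₁, Ω₁, mΩ₁, P₁, hP₁, F₁, X₁, r₁, hFm₁, hXm₁, hrm₁, hF₁0, hX₁U, hI₁,
    hrb₁, hrec₁, hra₁, hFO₁, hseg₁, hT₁⟩ := h'
  obtain ⟨n₂, Ω₂, mΩ₂, P₂, hP₂, F₂, X₂, r₂, hFm₂, hXm₂, hrm₂, hF₂0, hX₂U, hI₂,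
    hrb₂, hrec₂, hra₂, hFO₂, hseg₂, hT₂⟩ := h''
  letI := mΩ₁; letI := mΩ₂
  haveI := hP₁; haveI := hP₂
  set N : ℕ := max n₁ n₂ + 1 with hN
  set up : Set (EuclideanSpace ℝ (Fin d)) := {y : EuclideanSpace ℝ (Fin d) | 0 < y ⟨0, hd⟩} with hup
  set P : Measure ((Ω₁ × Ω₂) × Ω₂) := (P₁.prod P₂).prod P₂ with hP
  haveI : IsProbabilityMeasure P := by rw [hP]; infer_instance
  -- measurability of the hemisphere
  have hupM : MeasurableSet up := by
    exact measurableSet_lt measurable_const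
      ((EuclideanSpace.proj (⟨0, hd⟩ : Fin d)).continuous.measurable)
  have hXsnd : Measurable fun ω : (Ω₁ × Ω₂) × Ω₂ => X₂ N ω.2 := (hXm₂ N).comp measurable_snd
  have hcM : MeasurableSet {ω : (Ω₁ × Ω₂) × Ω₂ | X₂ N ω.2 ∈ up} := hXsnd hupM
  have hU1 : U up = 2⁻¹ := by
    rw [show ((2 : ℝ≥0∞))⁻¹ = 1 / 2 by rw [one_div]]; exact hUhemi.1
  have hU2 : P₂ (X₂ N ⁻¹' up) = 2⁻¹ := by
    have := hX₂U N (by omega)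
    rw [← Measure.map_apply (hXm₂ N) hupM, this, hU1]
  have hU2c : P₂ ((X₂ N ⁻¹' up)ᶜ) = 2⁻¹ := by
    rw [measure_compl ((hXm₂ N) hupM) (measure_ne_top _ _), hU2, measure_univ]
    simp [ENNReal.one_sub_inv_two]
  -- the processes
  set Xn : ℕ → (Ω₁ × Ω₂) × Ω₂ → EuclideanSpace ℝ (Fin d) := fun k ω =>
    if k = 1 then X₂ N ω.2
    else if k ≤ N then (if X₂ N ω.2 ∈ up then X₁ (k-1) ω.1.1 else X₂ (k-1) ω.1.2)
    else X₂ k ω.1.2 with hXnd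
  set Rn : ℕ → (Ω₁ × Ω₂) × Ω₂ → ℝ := fun k ω =>
    if 2 ≤ k then
      (if X₂ N ω.2 ∈ up then (if k - 1 ≤ n₁ then r₁ (k-1) ω.1.1 else 0)
       else (if k - 1 ≤ n₂ then r₂ (k-1) ω.1.2 else 0))
    else 0 with hRnd
  set Fn : ℕ → (Ω₁ × Ω₂) × Ω₂ → EuclideanSpace ℝ (Fin d) := fun k ω =>
    if X₂ N ω.2 ∈ up then F₁ (min (k-1) n₁) ω.1.1 else F₂ (min (k-1) n₂) ω.1.2 with hFnd
  -- pointwise evaluation lemmas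
  have hXn1 : ∀ ω, Xn 1 ω = X₂ N ω.2 := fun ω => by simp [hXnd]
  have hXnm : ∀ k, k ≠ 1 → k ≤ N → ∀ ω,
      Xn k ω = (if X₂ N ω.2 ∈ up then X₁ (k-1) ω.1.1 else X₂ (k-1) ω.1.2) := by
    intro k h1 h2 ω; simp only [hXnd]; rw [if_neg h1, if_pos h2]
  have hXnh : ∀ k, N < k → ∀ ω, Xn k ω = X₂ k ω.1.2 := by
    intro k h ω; simp only [hXnd]; rw [if_neg (by omega), if_neg (by omega)]
  have hRn1 : ∀ k, k ≤ 1 → ∀ ω, Rn k ω = 0 := by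
    intro k h ω; simp only [hRnd]; rw [if_neg (by omega)]
  have hRnm : ∀ k, 2 ≤ k → ∀ ω,
      Rn k ω = (if X₂ N ω.2 ∈ up then (if k - 1 ≤ n₁ then r₁ (k-1) ω.1.1 else 0)
       else (if k - 1 ≤ n₂ then r₂ (k-1) ω.1.2 else 0)) := by
    intro k h ω; simp only [hRnd]; rw [if_pos h]
  -- measurability
  have hFnM : ∀ k, Measurable (Fn k) := by
    intro k
    exact Measurable.ite hcM ((hFm₁ _).comp (measurable_fst.comp measurable_fst))
      ((hFm₂ _).comp (measurable_snd.comp measurable_fst))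
  have hXnM : ∀ k, Measurable (Xn k) := by
    intro k
    rcases eq_or_ne k 1 with h | h
    · subst h
      have : Xn 1 = fun ω : (Ω₁ × Ω₂) × Ω₂ => X₂ N ω.2 := funext hXn1
      rw [this]; exact (hXm₂ N).comp measurable_snd
    rcases le_or_gt k N with h2 | h2
    · have : Xn k = fun ω : (Ω₁ × Ω₂) × Ω₂ =>
        (if X₂ N ω.2 ∈ up then X₁ (k-1) ω.1.1 else X₂ (k-1) ω.1.2) := funext (hXnm k h h2)
      rw [this]
      exact Measurable.ite hcM ((hXm₁ _).comp (measurable_fst.comp measurable_fst))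
        ((hXm₂ _).comp (measurable_snd.comp measurable_fst))
    · have : Xn k = fun ω : (Ω₁ × Ω₂) × Ω₂ => X₂ k ω.1.2 := funext (hXnh k h2)
      rw [this]; exact (hXm₂ _).comp (measurable_snd.comp measurable_fst)
  have hRnM : ∀ k, Measurable (Rn k) := by
    intro k
    rcases le_or_gt k 1 with h | h
    · have : Rn k = fun _ : (Ω₁ × Ω₂) × Ω₂ => (0:ℝ) := funext (hRn1 k h)
      rw [this]; exact measurable_const
    · have : Rn k = fun ω : (Ω₁ × Ω₂) × Ω₂ =>
        (if X₂ N ω.2 ∈ up then (if k - 1 ≤ n₁ then r₁ (k-1) ω.1.1 else 0)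
         else (if k - 1 ≤ n₂ then r₂ (k-1) ω.1.2 else 0)) := funext (hRnm k h)
      rw [this]
      refine Measurable.ite hcM ?_ ?_
      · split_ifs
        · exact (hrm₁ _).comp (measurable_fst.comp measurable_fst)
        · exact measurable_const
      · split_ifs
        · exact (hrm₂ _).comp (measurable_snd.comp measurable_fst)
        · exact measurable_const
  -- the union-of-two-rectangles measure computation
  have key2 : ∀ (B₁ : Set Ω₁) (B₂ : Set Ω₂), MeasurableSet B₂ →
      P (((B₁ ×ˢ (Set.univ : Set Ω₂)) ×ˢ (X₂ N ⁻¹' up)) ∪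
         (((Set.univ : Set Ω₁) ×ˢ B₂) ×ˢ (X₂ N ⁻¹' up)ᶜ)) =
      P₁ B₁ * 2⁻¹ + P₂ B₂ * 2⁻¹ := by
    intro B₁ B₂ hB₂
    rw [measure_union ?_ ((MeasurableSet.univ.prod hB₂).prod ((hXm₂ N) hupM).compl)]
    · rw [hP, Measure.prod_prod, Measure.prod_prod, Measure.prod_prod, Measure.prod_prod]
      simp [hU2, hU2c]
    · rw [Set.disjoint_left]
      rintro ω ⟨-, h1⟩ ⟨-, h2⟩
      exact h2 h1
  -- marginals
  have hN1 : 1 ≤ N := by rw [hN]; exact Nat.succ_le_succ (Nat.zero_le _)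
  have hn₁N : n₁ < N := by rw [hN]; exact Nat.lt_succ_of_le (le_max_left _ _)
  have hn₂N : n₂ < N := by rw [hN]; exact Nat.lt_succ_of_le (le_max_right _ _)
  have hmargF : ∀ (A : Set (EuclideanSpace ℝ (Fin d))), MeasurableSet A → P (Fn 0 ⁻¹' A) = μ A := by
    intro A hA
    have hset : Fn 0 ⁻¹' A =
        (((F₁ 0 ⁻¹' A) ×ˢ (Set.univ : Set Ω₂)) ×ˢ (X₂ N ⁻¹' up)) ∪
        (((Set.univ : Set Ω₁) ×ˢ (F₂ 0 ⁻¹' A)) ×ˢ (X₂ N ⁻¹' up)ᶜ) := by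
      ext ω
      by_cases hc : X₂ N ω.2 ∈ up
      · simp [hFnd, hc, Set.mem_prod]
      · simp [hFnd, hc, Set.mem_prod]
    rw [hset, key2 _ _ ((hFm₂ 0) hA)]
    have h1 : P₁ (F₁ 0 ⁻¹' A) = μ A := by rw [← hF₁0, Measure.map_apply (hFm₁ 0) hA]
    have h2 : P₂ (F₂ 0 ⁻¹' A) = μ A := by rw [← hF₂0, Measure.map_apply (hFm₂ 0) hA]
    rw [h1, h2, ← mul_add, ENNReal.inv_two_add_inv_two, mul_one]
  have hmargX : ∀ k, 1 ≤ k → ∀ (A : Set (EuclideanSpace ℝ (Fin d))), MeasurableSet A → P (Xn k ⁻¹' A) = U A := by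
    intro k hk A hA
    rcases eq_or_ne k 1 with h | h
    · subst h
      have hset : Xn 1 ⁻¹' A =
          (((Set.univ : Set Ω₁) ×ˢ (Set.univ : Set Ω₂)) ×ˢ (X₂ N ⁻¹' A)) := by
        ext ω; simp [hXn1 ω, Set.mem_prod]
      rw [hset, hP, Measure.prod_prod, Measure.prod_prod, ← Measure.map_apply (hXm₂ N) hA,
        hX₂U N hN1]
      simp
    rcases le_or_gt k N with h2 | h2
    · have hset : Xn k ⁻¹' A =
          (((X₁ (k-1) ⁻¹' A) ×ˢ (Set.univ : Set Ω₂)) ×ˢ (X₂ N ⁻¹' up)) ∪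
          (((Set.univ : Set Ω₁) ×ˢ (X₂ (k-1) ⁻¹' A)) ×ˢ (X₂ N ⁻¹' up)ᶜ) := by
        ext ω
        by_cases hc : X₂ N ω.2 ∈ up
        · simp [hXnm k h h2 ω, hc, Set.mem_prod]
        · simp [hXnm k h h2 ω, hc, Set.mem_prod]
      rw [hset, key2 _ _ ((hXm₂ _) hA)]
      have e1 : P₁ (X₁ (k-1) ⁻¹' A) = U A := by
        rw [← hX₁U (k-1) (by omega), Measure.map_apply (hXm₁ _) hA]
      have e2 : P₂ (X₂ (k-1) ⁻¹' A) = U A := by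
        rw [← hX₂U (k-1) (by omega), Measure.map_apply (hXm₂ _) hA]
      rw [e1, e2, ← mul_add, ENNReal.inv_two_add_inv_two, mul_one]
    · have hset : Xn k ⁻¹' A =
          (((Set.univ : Set Ω₁) ×ˢ (X₂ k ⁻¹' A)) ×ˢ (Set.univ : Set Ω₂)) := by
        ext ω; simp [hXnh k h2 ω, Set.mem_prod]
      rw [hset, hP, Measure.prod_prod, Measure.prod_prod, ← Measure.map_apply (hXm₂ k) hA,
        hX₂U k (by omega)]
      simp
  have hterm₁ : ∀ ω₁, F₁ n₁ ω₁ ∈ O := by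
    intro ω₁
    rcases Nat.eq_zero_or_pos n₁ with h0 | h0
    · rw [h0]; exact hFO₁ ω₁
    · have h := hseg₁ (n₁ - 1) (by omega) ω₁ 1 ⟨zero_le_one, le_refl 1⟩
      rw [one_mul] at h
      rw [show n₁ = n₁ - 1 + 1 by omega, hrec₁ (n₁ - 1) (by omega) ω₁]
      exact h
  have hterm₂ : ∀ ω₂, F₂ n₂ ω₂ ∈ O := by
    intro ω₂
    rcases Nat.eq_zero_or_pos n₂ with h0 | h0
    · rw [h0]; exact hFO₂ ω₂
    · have h := hseg₂ (n₂ - 1) (by omega) ω₂ 1 ⟨zero_le_one, le_refl 1⟩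
      rw [one_mul] at h
      rw [show n₂ = n₂ - 1 + 1 by omega, hrec₂ (n₂ - 1) (by omega) ω₂]
      exact h
  -- final assembly
  refine ⟨N, (Ω₁ × Ω₂) × Ω₂, inferInstance, P, inferInstance, Fn, Xn, Rn, hFnM, hXnM, hRnM, ?_, ?_, ?_, ?_,
    ?_, ?_, ?_, ?_, ?_⟩
  · -- initial law
    refine Measure.ext fun A hA => ?_
    rw [Measure.map_apply (hFnM 0) hA, hmargF A hA]
  · -- direction laws
    intro k hk
    refine Measure.ext fun A hA => ?_
    rw [Measure.map_apply (hXnM k) hA, hmargX k hk A hA]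
  · -- independence
    rw [iIndepFun_iff_measure_inter_preimage_eq_mul]
    intro S A hA
    have hmarg : ∀ i ∈ S, P ((if i = 0 then Fn 0 else Xn i) ⁻¹' A i)
        = (if i = 0 then μ (A i) else U (A i)) := by
      intro i hi
      rcases eq_or_ne i 0 with h | h
      · subst h; rw [if_pos rfl, if_pos rfl]; exact hmargF (A 0) (hA 0 hi)
      · rw [if_neg h, if_neg h]; exact hmargX i (by omega) (A i) (hA i hi)
    set Sa := S.filter (fun i => ¬ i = 1 ∧ i ≤ N) with hSa
    set Sb := S.filter (fun i => N < i) with hSb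
    set A1 : Set (EuclideanSpace ℝ (Fin d)) := if 1 ∈ S then A 1 else Set.univ with hA1
    have hA1M : MeasurableSet A1 := by
      rw [hA1]; split_ifs with h; exacts [hA 1 h, MeasurableSet.univ]
    set Ba : Set Ω₁ := ⋂ i ∈ Sa, (if i = 0 then F₁ 0 else X₁ (i-1)) ⁻¹' A i with hBad
    set Bb : Set Ω₂ := ⋂ i ∈ Sb, X₂ i ⁻¹' A i with hBbd
    set Cb : Set Ω₂ := (⋂ i ∈ Sa, (if i = 0 then F₂ 0 else X₂ (i-1)) ⁻¹' A i) ∩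
      (⋂ i ∈ Sb, X₂ i ⁻¹' A i) with hCbd
    -- heads decomposition
    have hheads : (⋂ i ∈ S, (if i = 0 then Fn 0 else Xn i) ⁻¹' A i) ∩
        {ω : (Ω₁ × Ω₂) × Ω₂ | X₂ N ω.2 ∈ up}
        = (Ba ×ˢ Bb) ×ˢ (X₂ N ⁻¹' (A1 ∩ up)) := by
      ext ω
      simp only [Set.mem_inter_iff, Set.mem_iInter, Set.mem_preimage, Set.mem_prod,
        Set.mem_setOf_eq, hBad, hBbd, hSa, hSb, Finset.mem_filter]
      constructor
      · rintro ⟨hall, hc⟩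
        refine ⟨⟨fun i hi => ?_, fun i hi => ?_⟩, ?_, hc⟩
        · have h := hall i hi.1
          rcases eq_or_ne i 0 with rfl | h0
          · rw [if_pos rfl] at h ⊢
            simp only [hFnd] at h
            rw [if_pos hc] at h
            simpa using h
          · rw [if_neg h0] at h ⊢
            rw [hXnm i hi.2.1 hi.2.2 ω, if_pos hc] at h
            exact h
        · have h := hall i hi.1
          rw [if_neg (by omega)] at h
          rwa [hXnh i hi.2 ω] at h
        · rw [hA1]
          split_ifs with h1S
          · have h := hall 1 h1S
            rw [if_neg one_ne_zero] at h
            rwa [hXn1 ω] at h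
          · exact Set.mem_univ _
      · rintro ⟨⟨ha, hb⟩, hA1mem, hc⟩
        refine ⟨fun i hi => ?_, hc⟩
        rcases eq_or_ne i 1 with rfl | h1
        · rw [if_neg one_ne_zero, hXn1 ω]
          rw [hA1] at hA1mem
          rwa [if_pos hi] at hA1mem
        rcases le_or_gt i N with hiN | hiN
        · have h := ha i ⟨hi, h1, hiN⟩
          rcases eq_or_ne i 0 with rfl | h0
          · rw [if_pos rfl] at h ⊢
            simp only [hFnd]
            rw [if_pos hc]
            simpa using h
          · rw [if_neg h0] at h ⊢
            rw [hXnm i h1 hiN ω, if_pos hc]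
            exact h
        · have h := hb i ⟨hi, hiN⟩
          rw [if_neg (by omega), hXnh i hiN ω]
          exact h
    -- tails decomposition
    have htails : (⋂ i ∈ S, (if i = 0 then Fn 0 else Xn i) ⁻¹' A i) \ {ω : (Ω₁ × Ω₂) × Ω₂ | X₂ N ω.2 ∈ up}
        = ((Set.univ : Set Ω₁) ×ˢ Cb) ×ˢ (X₂ N ⁻¹' (A1 \ up)) := by
      ext ω
      simp only [Set.mem_diff, Set.mem_iInter, Set.mem_preimage, Set.mem_prod,
        Set.mem_setOf_eq, hCbd, hSa, hSb, Finset.mem_filter, Set.mem_inter_iff]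
      constructor
      · rintro ⟨hall, hc⟩
        refine ⟨⟨Set.mem_univ _, fun i hi => ?_, fun i hi => ?_⟩, ?_, hc⟩
        · have h := hall i hi.1
          rcases eq_or_ne i 0 with rfl | h0
          · rw [if_pos rfl] at h ⊢
            simp only [hFnd] at h
            rw [if_neg hc] at h
            simpa using h
          · rw [if_neg h0] at h ⊢
            rw [hXnm i hi.2.1 hi.2.2 ω, if_neg hc] at h
            exact h
        · have h := hall i hi.1
          rw [if_neg (by omega)] at h
          rwa [hXnh i hi.2 ω] at h
        · rw [hA1]
          split_ifs with h1S
          · have h := hall 1 h1S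
            rw [if_neg one_ne_zero] at h
            rwa [hXn1 ω] at h
          · exact Set.mem_univ _
      · rintro ⟨⟨-, ha, hb⟩, hA1mem, hc⟩
        refine ⟨fun i hi => ?_, hc⟩
        rcases eq_or_ne i 1 with rfl | h1
        · rw [if_neg one_ne_zero, hXn1 ω]
          rw [hA1] at hA1mem
          rwa [if_pos hi] at hA1mem
        rcases le_or_gt i N with hiN | hiN
        · have h := ha i ⟨hi, h1, hiN⟩
          rcases eq_or_ne i 0 with rfl | h0
          · rw [if_pos rfl] at h ⊢
            simp only [hFnd]
            rw [if_neg hc]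
            simpa using h
          · rw [if_neg h0] at h ⊢
            rw [hXnm i h1 hiN ω, if_neg hc]
            exact h
        · have h := hb i ⟨hi, hiN⟩
          rw [if_neg (by omega), hXnh i hiN ω]
          exact h
    -- measure of heads first factor
    have himg : ∀ j ∈ Sa.image (· - 1), MeasurableSet (A (if j = 0 then 0 else j + 1)) := by
      intro j hj
      obtain ⟨i, hi, rfl⟩ := Finset.mem_image.mp hj
      rw [hSa, Finset.mem_filter] at hi
      have he : (if i - 1 = 0 then 0 else i - 1 + 1) = i := by split_ifs <;> omega
      rw [he]
      exact hA i hi.1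
    have hinj : ∀ x ∈ Sa, ∀ y ∈ Sa, x - 1 = y - 1 → x = y := by
      intro x hx y hy hxy
      rw [hSa, Finset.mem_filter] at hx hy
      omega
    have hPa : P₁ Ba = ∏ i ∈ Sa, (if i = 0 then μ (A i) else U (A i)) := by
      have key := hI₁.measure_inter_preimage_eq_mul (Sa.image (· - 1))
        (sets := fun j => A (if j = 0 then 0 else j + 1)) himg
      have hre : Ba = ⋂ j ∈ Sa.image (· - 1),
          (if j = 0 then F₁ 0 else X₁ j) ⁻¹' (A (if j = 0 then 0 else j + 1)) := by
        ext x
        simp only [hBad, Set.mem_iInter, Set.mem_preimage, Finset.mem_image, hSa,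
          Finset.mem_filter]
        constructor
        · rintro h j ⟨i, hi, rfl⟩
          have h' := h i hi
          rcases eq_or_ne i 0 with rfl | h0
          · simpa using h'
          · have hne : ¬ (i - 1 = 0) := by omega
            rw [if_neg hne, if_neg hne, show i - 1 + 1 = i by omega]
            rwa [if_neg h0] at h'
        · intro h i hi
          have h' := h (i - 1) ⟨i, hi, rfl⟩
          rcases eq_or_ne i 0 with rfl | h0
          · simpa using h'
          · have hne : ¬ (i - 1 = 0) := by have := hi.2.1; omega
            rw [if_neg hne, if_neg hne, show i - 1 + 1 = i by omega] at h'
            rwa [if_neg h0]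
      rw [hre, key, Finset.prod_image hinj]
      refine Finset.prod_congr rfl fun i hi => ?_
      rw [hSa, Finset.mem_filter] at hi
      beta_reduce
      rcases eq_or_ne i 0 with rfl | h0
      · simp only [show (0:ℕ) - 1 = 0 from rfl, reduceIte, if_true]
        rw [← hF₁0, Measure.map_apply (hFm₁ 0) (hA 0 hi.1)]
      · have hne : ¬ (i - 1 = 0) := by have := hi.2.1; omega
        rw [if_neg hne, if_neg hne, if_neg h0, show i - 1 + 1 = i by omega,
          ← hX₁U (i-1) (by omega), Measure.map_apply (hXm₁ _) (hA i hi.1)]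
    have hPb : P₂ Bb = ∏ i ∈ Sb, U (A i) := by
      have key := hI₂.measure_inter_preimage_eq_mul Sb (sets := A)
        (fun i hi => hA i (by rw [hSb, Finset.mem_filter] at hi; exact hi.1))
      have hre : Bb = ⋂ i ∈ Sb, (if i = 0 then F₂ 0 else X₂ i) ⁻¹' A i := by
        ext x
        simp only [hBbd, Set.mem_iInter, Set.mem_preimage, hSb, Finset.mem_filter]
        constructor
        · intro h i hi
          rw [if_neg (by omega)]
          exact h i hi
        · intro h i hi
          have h' := h i hi
          rwa [if_neg (by omega)] at h'
      rw [hre, key]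
      refine Finset.prod_congr rfl fun i hi => ?_
      rw [hSb, Finset.mem_filter] at hi
      beta_reduce
      rw [if_neg (show ¬ i = 0 by have := hi.2; omega),
        ← hX₂U i (show 1 ≤ i by have := hi.2; omega),
        Measure.map_apply (hXm₂ _) (hA i hi.1)]
    -- tails: second factor
    have hdisj : Disjoint (Sa.image (· - 1)) Sb := by
      rw [Finset.disjoint_left]
      intro j hj hj'
      obtain ⟨i, hi, rfl⟩ := Finset.mem_image.mp hj
      rw [hSa, Finset.mem_filter] at hi
      rw [hSb, Finset.mem_filter] at hj'
      omega
    have hPCb : P₂ Cb = (∏ i ∈ Sa, (if i = 0 then μ (A i) else U (A i))) *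
        ∏ i ∈ Sb, U (A i) := by
      have hD : ∀ j ∈ Sa.image (· - 1) ∪ Sb, MeasurableSet
          (if N < j then A j else A (if j = 0 then 0 else j + 1)) := by
        intro j hj
        rcases Finset.mem_union.mp hj with hj | hj
        · obtain ⟨i, hi, rfl⟩ := Finset.mem_image.mp hj
          rw [hSa, Finset.mem_filter] at hi
          rw [if_neg (by omega), show (if i - 1 = 0 then 0 else i - 1 + 1) = i from
            by split_ifs <;> omega]
          exact hA i hi.1
        · rw [hSb, Finset.mem_filter] at hj
          rw [if_pos hj.2]
          exact hA j hj.1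
      have key := hI₂.measure_inter_preimage_eq_mul (Sa.image (· - 1) ∪ Sb)
        (sets := fun j => if N < j then A j else A (if j = 0 then 0 else j + 1)) hD
      have hre : Cb = ⋂ j ∈ Sa.image (· - 1) ∪ Sb, (if j = 0 then F₂ 0 else X₂ j) ⁻¹'
          (if N < j then A j else A (if j = 0 then 0 else j + 1)) := by
        ext x
        simp only [hCbd, Set.mem_inter_iff, Set.mem_iInter, Set.mem_preimage,
          Finset.mem_union, Finset.mem_image, hSa, hSb, Finset.mem_filter]
        constructor
        · rintro ⟨h1, h2⟩ j hj
          rcases hj with ⟨i, hi, rfl⟩ | hj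
          · have h' := h1 i hi
            rw [if_neg (show ¬ N < i - 1 by omega)]
            rcases eq_or_ne i 0 with rfl | h0
            · simpa using h'
            · have hne : ¬ (i - 1 = 0) := by have := hi.2.1; omega
              rw [if_neg hne, if_neg hne, show i - 1 + 1 = i by omega]
              rwa [if_neg h0] at h'
          · have h' := h2 j hj
            rw [if_pos hj.2, if_neg (show ¬ j = 0 by have := hj.2; omega)]
            exact h'
        · intro h
          constructor
          · intro i hi
            have h' := h (i - 1) (Or.inl ⟨i, hi, rfl⟩)
            rw [if_neg (show ¬ N < i - 1 by have := hi.2.1; have := hi.2.2; omega)] at h'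
            rcases eq_or_ne i 0 with rfl | h0
            · simpa using h'
            · have hne : ¬ (i - 1 = 0) := by have := hi.2.1; omega
              rw [if_neg hne, if_neg hne, show i - 1 + 1 = i by omega] at h'
              rwa [if_neg h0]
          · intro i hi
            have h' := h i (Or.inr hi)
            rwa [if_pos hi.2, if_neg (show ¬ i = 0 by have := hi.2; omega)] at h'
      rw [hre, key, Finset.prod_union hdisj, Finset.prod_image hinj]
      congr 1
      · refine Finset.prod_congr rfl fun i hi => ?_
        rw [hSa, Finset.mem_filter] at hi
        beta_reduce
        rw [if_neg (show ¬ N < i - 1 by have := hi.2.1; have := hi.2.2; omega)]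
        rcases eq_or_ne i 0 with rfl | h0
        · simp only [show (0:ℕ) - 1 = 0 from rfl, reduceIte, if_true]
          rw [← hF₂0, Measure.map_apply (hFm₂ 0) (hA 0 hi.1)]
        · have hne : ¬ (i - 1 = 0) := by have := hi.2.1; omega
          rw [if_neg hne, if_neg hne, if_neg h0, show i - 1 + 1 = i by omega,
            ← hX₂U (i-1) (by omega), Measure.map_apply (hXm₂ _) (hA i hi.1)]
      · refine Finset.prod_congr rfl fun i hi => ?_
        rw [hSb, Finset.mem_filter] at hi
        beta_reduce
        rw [if_pos hi.2, if_neg (show ¬ i = 0 by have := hi.2; omega),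
          ← hX₂U i (show 1 ≤ i by have := hi.2; omega),
          Measure.map_apply (hXm₂ _) (hA i hi.1)]
    -- the coin factors
    have hPc1 : P₂ (X₂ N ⁻¹' (A1 ∩ up)) = U (A1 ∩ up) := by
      rw [← hX₂U N hN1, Measure.map_apply (hXm₂ N) (hA1M.inter hupM)]
    have hPc2 : P₂ (X₂ N ⁻¹' (A1 \ up)) = U (A1 \ up) := by
      rw [← hX₂U N hN1, Measure.map_apply (hXm₂ N) (hA1M.diff hupM)]
    -- right-hand side rearrangement
    have hRHS : ∏ i ∈ S, (if i = 0 then μ (A i) else U (A i))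
        = ((∏ i ∈ Sa, (if i = 0 then μ (A i) else U (A i))) * ∏ i ∈ Sb, U (A i)) * U A1 := by
      rw [← Finset.prod_filter_mul_prod_filter_not S (fun i => ¬ i = 1 ∧ i ≤ N)]
      have hcompl : S.filter (fun i => ¬(¬ i = 1 ∧ i ≤ N)) =
          S.filter (fun i => i = 1) ∪ Sb := by
        rw [hSb, ← Finset.filter_or]
        exact Finset.filter_congr fun i _ => by constructor <;> intro h <;> omega
      have hdisj2 : Disjoint (S.filter (fun i => i = 1)) Sb := by
        rw [Finset.disjoint_left]
        intro j hj hj'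
        rw [Finset.mem_filter] at hj
        rw [hSb, Finset.mem_filter] at hj'
        omega
      rw [hcompl, Finset.prod_union hdisj2, ← hSa]
      have h1 : ∏ i ∈ S.filter (fun i => i = 1), (if i = 0 then μ (A i) else U (A i))
          = U A1 := by
        rw [Finset.filter_eq' S 1]
        split_ifs with h1S
        · rw [Finset.prod_singleton, if_neg one_ne_zero, hA1, if_pos h1S]
        · rw [Finset.prod_empty, hA1, if_neg h1S, measure_univ]
      have h2 : ∏ i ∈ Sb, (if i = 0 then μ (A i) else U (A i)) = ∏ i ∈ Sb, U (A i) := by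
        refine Finset.prod_congr rfl fun i hi => ?_
        rw [hSb, Finset.mem_filter] at hi
        rw [if_neg (by omega)]
      rw [h1, h2]
      ring
    -- put it all together
    calc P (⋂ i ∈ S, (if i = 0 then Fn 0 else Xn i) ⁻¹' A i)
        = P ((⋂ i ∈ S, (if i = 0 then Fn 0 else Xn i) ⁻¹' A i) ∩
            {ω : (Ω₁ × Ω₂) × Ω₂ | X₂ N ω.2 ∈ up}) +
          P ((⋂ i ∈ S, (if i = 0 then Fn 0 else Xn i) ⁻¹' A i) \
            {ω : (Ω₁ × Ω₂) × Ω₂ | X₂ N ω.2 ∈ up}) := (measure_inter_add_diff _ hcM).symm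
      _ = P₁ Ba * P₂ Bb * U (A1 ∩ up) + P₂ Cb * U (A1 \ up) := by
          rw [hheads, htails, hP, Measure.prod_prod, Measure.prod_prod,
            Measure.prod_prod, Measure.prod_prod, hPc1, hPc2, measure_univ, one_mul]
      _ = ∏ i ∈ S, (if i = 0 then μ (A i) else U (A i)) := by
          rw [hPa, hPb, hPCb, hRHS, ← measure_inter_add_diff A1 hupM]
          ring
      _ = ∏ i ∈ S, P ((if i = 0 then Fn 0 else Xn i) ⁻¹' A i) :=
          (Finset.prod_congr rfl hmarg).symm
  · -- bounds
    intro k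
    rcases le_or_gt k 1 with h | h
    · exact ⟨0, fun ω => by rw [hRn1 k h ω]; exact ⟨le_refl _, le_refl _⟩⟩
    · obtain ⟨C₁, hC₁⟩ := hrb₁ (k-1)
      obtain ⟨C₂, hC₂⟩ := hrb₂ (k-1)
      refine ⟨max C₁ (max C₂ 0), fun ω => ?_⟩
      rw [hRnm k h ω]
      split_ifs
      · exact ⟨(hC₁ ω.1.1).1, le_trans (hC₁ ω.1.1).2 (le_max_left _ _)⟩
      · exact ⟨le_refl _, le_trans (le_max_right _ _) (le_max_right _ _)⟩
      · exact ⟨(hC₂ ω.1.2).1,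
          le_trans (hC₂ ω.1.2).2 (le_trans (le_max_left _ _) (le_max_right _ _))⟩
      · exact ⟨le_refl _, le_trans (le_max_right _ _) (le_max_right _ _)⟩
  · -- recurrence
    intro k hk ω
    rcases Nat.eq_zero_or_pos k with h0 | h0
    · subst h0
      rw [hRn1 1 le_rfl ω]
      simp [hFnd]
    obtain ⟨j, rfl⟩ : ∃ j, k = j + 1 := ⟨k - 1, by omega⟩
    by_cases hc : X₂ N ω.2 ∈ up
    · rcases le_or_gt (j+1) n₁ with h1 | h1
      · have hR : Rn (j + 1 + 1) ω = r₁ (j + 1) ω.1.1 := by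
          rw [hRnm (j + 1 + 1) (by omega) ω, if_pos hc]
          simp only [Nat.add_sub_cancel]
          rw [if_pos h1]
        have hX : Xn (j + 1 + 1) ω = X₁ (j + 1) ω.1.1 := by
          rw [hXnm (j + 1 + 1) (by omega) (by omega) ω, if_pos hc]
          simp only [Nat.add_sub_cancel]
        simp only [hFnd]
        rw [if_pos hc, if_pos hc, hR, hX]
        simp only [Nat.add_sub_cancel]
        rw [min_eq_left h1, min_eq_left (by omega)]
        exact hrec₁ j (by omega) ω.1.1
      · have hR : Rn (j + 1 + 1) ω = 0 := by
          rw [hRnm (j + 1 + 1) (by omega) ω, if_pos hc]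
          simp only [Nat.add_sub_cancel]
          rw [if_neg (by omega)]
        simp only [hFnd]
        rw [if_pos hc, if_pos hc, hR]
        simp only [Nat.add_sub_cancel, zero_smul, add_zero]
        rw [min_eq_right (by omega), min_eq_right (by omega)]
    · rcases le_or_gt (j+1) n₂ with h1 | h1
      · have hR : Rn (j + 1 + 1) ω = r₂ (j + 1) ω.1.2 := by
          rw [hRnm (j + 1 + 1) (by omega) ω, if_neg hc]
          simp only [Nat.add_sub_cancel]
          rw [if_pos h1]
        have hX : Xn (j + 1 + 1) ω = X₂ (j + 1) ω.1.2 := by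
          rw [hXnm (j + 1 + 1) (by omega) (by omega) ω, if_neg hc]
          simp only [Nat.add_sub_cancel]
        simp only [hFnd]
        rw [if_neg hc, if_neg hc, hR, hX]
        simp only [Nat.add_sub_cancel]
        rw [min_eq_left h1, min_eq_left (by omega)]
        exact hrec₂ j (by omega) ω.1.2
      · have hR : Rn (j + 1 + 1) ω = 0 := by
          rw [hRnm (j + 1 + 1) (by omega) ω, if_neg hc]
          simp only [Nat.add_sub_cancel]
          rw [if_neg (by omega)]
        simp only [hFnd]
        rw [if_neg hc, if_neg hc, hR]
        simp only [Nat.add_sub_cancel, zero_smul, add_zero]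
        rw [min_eq_right (by omega), min_eq_right (by omega)]
  · -- adaptedness
    intro k hk
    rcases Nat.eq_zero_or_pos k with h0 | h0
    · subst h0
      have : Rn 1 = fun _ : (Ω₁ × Ω₂) × Ω₂ => (0:ℝ) := funext (hRn1 1 le_rfl)
      rw [this]
      exact measurable_const
    intro B hB
    rw [MeasurableSpace.measurableSet_comap]
    -- heads part
    have hT1 : ∃ T₁ : Set (EuclideanSpace ℝ (Fin d) × (Fin k → EuclideanSpace ℝ (Fin d))),
        MeasurableSet T₁ ∧ ∀ ω : (Ω₁ × Ω₂) × Ω₂, X₂ N ω.2 ∈ up →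
          ((Fn 0 ω, fun i : Fin k => Xn (i + 1) ω) ∈ T₁ ↔ Rn (k+1) ω ∈ B) := by
      rcases le_or_gt k n₁ with h1 | h1
      · have h := hra₁ (k-1) (by omega) hB
        rw [MeasurableSpace.measurableSet_comap] at h
        obtain ⟨S₁, hS₁m, hS₁⟩ := h
        refine ⟨(fun p : EuclideanSpace ℝ (Fin d) × (Fin k → EuclideanSpace ℝ (Fin d)) =>
            ((p.1 : EuclideanSpace ℝ (Fin d)),
             fun i : Fin (k-1) => p.2 ⟨i.1 + 1, by have := i.2; omega⟩)) ⁻¹' S₁, ?_, ?_⟩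
        · exact (measurable_fst.prodMk (measurable_pi_lambda _ fun i =>
            (measurable_pi_apply _).comp measurable_snd)) hS₁m
        · intro ω hc
          simp only [Set.mem_preimage]
          have he : ((Fn 0 ω, fun i : Fin k => Xn (i + 1) ω).1,
              fun i : Fin (k-1) => (Fn 0 ω, fun i : Fin k => Xn (i + 1) ω).2
                ⟨i.1 + 1, by have := i.2; omega⟩) =
              (F₁ 0 ω.1.1, fun i : Fin (k-1) => X₁ (i.1 + 1) ω.1.1) := by
            refine Prod.ext ?_ ?_
            · simp only [hFnd]
              rw [if_pos hc]
              simp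
            · funext i
              simp only []
              rw [hXnm (i.1 + 1 + 1) (by omega) (by have := i.2; omega) ω, if_pos hc]
              simp
          rw [he]
          have hiff := Set.ext_iff.mp hS₁ ω.1.1
          simp only [Set.mem_preimage] at hiff
          have hrw : k - 1 + 1 = k := by omega
          rw [hrw] at hiff
          rw [show ((F₁ 0 ω.1.1, fun i : Fin (k-1) => X₁ (i.1 + 1) ω.1.1) ∈ S₁) =
            ((F₁ 0 ω.1.1, fun i : Fin (k-1) => X₁ ((i : ℕ) + 1) ω.1.1) ∈ S₁) from rfl]
          rw [hiff]
          have hR : Rn (k+1) ω = r₁ k ω.1.1 := by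
            rw [hRnm (k+1) (by omega) ω, if_pos hc]
            simp only [Nat.add_sub_cancel]
            rw [if_pos h1]
          rw [hR]
      · refine ⟨if (0:ℝ) ∈ B then Set.univ else ∅, by split_ifs <;> simp, ?_⟩
        intro ω hc
        have hR : Rn (k+1) ω = 0 := by
          rw [hRnm (k+1) (by omega) ω, if_pos hc]
          simp only [Nat.add_sub_cancel]
          rw [if_neg (by omega)]
        rw [hR]
        split_ifs with h0B <;> simp [h0B]
    -- tails part
    have hT2 : ∃ T₂ : Set (EuclideanSpace ℝ (Fin d) × (Fin k → EuclideanSpace ℝ (Fin d))),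
        MeasurableSet T₂ ∧ ∀ ω : (Ω₁ × Ω₂) × Ω₂, X₂ N ω.2 ∉ up →
          ((Fn 0 ω, fun i : Fin k => Xn (i + 1) ω) ∈ T₂ ↔ Rn (k+1) ω ∈ B) := by
      rcases le_or_gt k n₂ with h1 | h1
      · have h := hra₂ (k-1) (by omega) hB
        rw [MeasurableSpace.measurableSet_comap] at h
        obtain ⟨S₂, hS₂m, hS₂⟩ := h
        refine ⟨(fun p : EuclideanSpace ℝ (Fin d) × (Fin k → EuclideanSpace ℝ (Fin d)) =>
            ((p.1 : EuclideanSpace ℝ (Fin d)),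
             fun i : Fin (k-1) => p.2 ⟨i.1 + 1, by have := i.2; omega⟩)) ⁻¹' S₂, ?_, ?_⟩
        · exact (measurable_fst.prodMk (measurable_pi_lambda _ fun i =>
            (measurable_pi_apply _).comp measurable_snd)) hS₂m
        · intro ω hc
          simp only [Set.mem_preimage]
          have he : ((Fn 0 ω, fun i : Fin k => Xn (i + 1) ω).1,
              fun i : Fin (k-1) => (Fn 0 ω, fun i : Fin k => Xn (i + 1) ω).2
                ⟨i.1 + 1, by have := i.2; omega⟩) =
              (F₂ 0 ω.1.2, fun i : Fin (k-1) => X₂ (i.1 + 1) ω.1.2) := by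
            refine Prod.ext ?_ ?_
            · simp only [hFnd]
              rw [if_neg hc]
              simp
            · funext i
              simp only []
              rw [hXnm (i.1 + 1 + 1) (by omega) (by have := i.2; omega) ω, if_neg hc]
              simp
          rw [he]
          have hiff := Set.ext_iff.mp hS₂ ω.1.2
          simp only [Set.mem_preimage] at hiff
          have hrw : k - 1 + 1 = k := by omega
          rw [hrw] at hiff
          rw [show ((F₂ 0 ω.1.2, fun i : Fin (k-1) => X₂ (i.1 + 1) ω.1.2) ∈ S₂) =
            ((F₂ 0 ω.1.2, fun i : Fin (k-1) => X₂ ((i : ℕ) + 1) ω.1.2) ∈ S₂) from rfl]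
          rw [hiff]
          have hR : Rn (k+1) ω = r₂ k ω.1.2 := by
            rw [hRnm (k+1) (by omega) ω, if_neg hc]
            simp only [Nat.add_sub_cancel]
            rw [if_pos h1]
          rw [hR]
      · refine ⟨if (0:ℝ) ∈ B then Set.univ else ∅, by split_ifs <;> simp, ?_⟩
        intro ω hc
        have hR : Rn (k+1) ω = 0 := by
          rw [hRnm (k+1) (by omega) ω, if_neg hc]
          simp only [Nat.add_sub_cancel]
          rw [if_neg (by omega)]
        rw [hR]
        split_ifs with h0B <;> simp [h0B]
    obtain ⟨T₁, hT₁m, hT₁iff⟩ := hT1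
    obtain ⟨T₂, hT₂m, hT₂iff⟩ := hT2
    set upset : Set (EuclideanSpace ℝ (Fin d) × (Fin k → EuclideanSpace ℝ (Fin d))) :=
      {p | p.2 ⟨0, h0⟩ ∈ up} with hupsetd
    have hupsetM : MeasurableSet upset :=
      ((measurable_pi_apply _).comp measurable_snd) hupM
    refine ⟨(upset ∩ T₁) ∪ (upsetᶜ ∩ T₂),
      (hupsetM.inter hT₁m).union (hupsetM.compl.inter hT₂m), ?_⟩
    ext ω
    simp only [Set.mem_preimage, Set.mem_union, Set.mem_inter_iff, Set.mem_compl_iff]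
    have hmem : (Fn 0 ω, fun i : Fin k => Xn (i + 1) ω) ∈ upset ↔ X₂ N ω.2 ∈ up := by
      simp only [hupsetd, Set.mem_setOf_eq]
      show Xn 1 ω ∈ up ↔ X₂ N ω.2 ∈ up
      rw [hXn1 ω]
    by_cases hc : X₂ N ω.2 ∈ up
    · simp only [hmem, hc, not_true, false_and, or_false, true_and]
      exact hT₁iff ω hc
    · simp only [hmem, hc, not_false_iff, false_and, false_or, true_and]
      exact hT₂iff ω hc
  · -- starts in O
    intro ω
    simp only [hFnd]
    split_ifs
    · simpa using hFO₁ ω.1.1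
    · simpa using hFO₂ ω.1.2
  · -- segments in O
    intro k hk ω lam hlam
    rcases Nat.eq_zero_or_pos k with h0 | h0
    · subst h0
      rw [hRn1 1 le_rfl ω, mul_zero, zero_smul, add_zero]
      simp only [hFnd]
      split_ifs
      · simpa using hFO₁ ω.1.1
      · simpa using hFO₂ ω.1.2
    obtain ⟨j, rfl⟩ : ∃ j, k = j + 1 := ⟨k - 1, by omega⟩
    by_cases hc : X₂ N ω.2 ∈ up
    · rcases le_or_gt (j+1) n₁ with h1 | h1
      · have hR : Rn (j + 1 + 1) ω = r₁ (j + 1) ω.1.1 := by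
          rw [hRnm (j + 1 + 1) (by omega) ω, if_pos hc]
          simp only [Nat.add_sub_cancel]
          rw [if_pos h1]
        have hX : Xn (j + 1 + 1) ω = X₁ (j + 1) ω.1.1 := by
          rw [hXnm (j + 1 + 1) (by omega) (by omega) ω, if_pos hc]
          simp only [Nat.add_sub_cancel]
        simp only [hFnd]
        rw [if_pos hc, hR, hX]
        simp only [Nat.add_sub_cancel]
        rw [min_eq_left (by omega)]
        exact hseg₁ j (by omega) ω.1.1 lam hlam
      · have hR : Rn (j + 1 + 1) ω = 0 := by
          rw [hRnm (j + 1 + 1) (by omega) ω, if_pos hc]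
          simp only [Nat.add_sub_cancel]
          rw [if_neg (by omega)]
        rw [hR, mul_zero, zero_smul, add_zero]
        simp only [hFnd]
        rw [if_pos hc]
        simp only [Nat.add_sub_cancel]
        rw [min_eq_right (by omega)]
        exact hterm₁ ω.1.1
    · rcases le_or_gt (j+1) n₂ with h1 | h1
      · have hR : Rn (j + 1 + 1) ω = r₂ (j + 1) ω.1.2 := by
          rw [hRnm (j + 1 + 1) (by omega) ω, if_neg hc]
          simp only [Nat.add_sub_cancel]
          rw [if_pos h1]
        have hX : Xn (j + 1 + 1) ω = X₂ (j + 1) ω.1.2 := by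
          rw [hXnm (j + 1 + 1) (by omega) (by omega) ω, if_neg hc]
          simp only [Nat.add_sub_cancel]
        simp only [hFnd]
        rw [if_neg hc, hR, hX]
        simp only [Nat.add_sub_cancel]
        rw [min_eq_left (by omega)]
        exact hseg₂ j (by omega) ω.1.2 lam hlam
      · have hR : Rn (j + 1 + 1) ω = 0 := by
          rw [hRnm (j + 1 + 1) (by omega) ω, if_neg hc]
          simp only [Nat.add_sub_cancel]
          rw [if_neg (by omega)]
        rw [hR, mul_zero, zero_smul, add_zero]
        simp only [hFnd]
        rw [if_neg hc]
        simp only [Nat.add_sub_cancel]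
        rw [min_eq_right (by omega)]
        exact hterm₂ ω.1.2
  · -- terminal law
    refine Measure.ext fun A hA => ?_
    rw [Measure.map_apply (hFnM N) hA]
    have hm₁ : min (N - 1) n₁ = n₁ := by
      rw [hN, Nat.add_sub_cancel]; exact min_eq_right (le_max_left _ _)
    have hm₂ : min (N - 1) n₂ = n₂ := by
      rw [hN, Nat.add_sub_cancel]; exact min_eq_right (le_max_right _ _)
    have hset : Fn N ⁻¹' A =
        (((F₁ n₁ ⁻¹' A) ×ˢ (Set.univ : Set Ω₂)) ×ˢ (X₂ N ⁻¹' up)) ∪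
        (((Set.univ : Set Ω₁) ×ˢ (F₂ n₂ ⁻¹' A)) ×ˢ (X₂ N ⁻¹' up)ᶜ) := by
      ext ω
      by_cases hc : X₂ N ω.2 ∈ up
      · simp [hFnd, hc, hm₁, hm₂, Set.mem_prod]
      · simp [hFnd, hc, hm₁, hm₂, Set.mem_prod]
    rw [hset, key2 _ _ ((hFm₂ n₂) hA)]
    have h1 : P₁ (F₁ n₁ ⁻¹' A) = σ' A := by rw [← hT₁, Measure.map_apply (hFm₁ n₁) hA]
    have h2 : P₂ (F₂ n₂ ⁻¹' A) = σ'' A := by rw [← hT₂, Measure.map_apply (hFm₂ n₂) hA]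
    rw [h1, h2, Measure.smul_apply, Measure.add_apply, smul_eq_mul]
    ring
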